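/- The polynomial encoding of RCC part-of coincides with set containment: for circles a and b with positive radii, the closed disc of a is a subset of the closed disc of b if and only if Δ(a,b) ≤ (r_a - r_b)² and r_a ≤ r_b. -/

import Mathlib

structure Circ where
  center : ℝ × ℝ
  radius : ℝ

noncomputable def Δ (a b : Circ) : ℝ :=
  (a.center.1 - b.center.1)^2 + (a.center.2 - b.center.2)^2

def closedDisc (c : Circ) : Set (ℝ × ℝ) :=
  {p | (p.1 - c.center.1)^2 + (p.2 - c.center.2)^2 ≤ c.radius^2}

set_option maxHeartbeats 1600000 in
theorem part_of_iff_subset (a b : Circ) (ha : 0 < a.radius) (hb : 0 < b.radius) :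
    closedDisc a ⊆ closedDisc b ↔ Δ a b ≤ (a.radius - b.radius)^2 ∧ a.radius ≤ b.radius := by
  obtain ⟨⟨x1, y1⟩, ra⟩ := a
  obtain ⟨⟨x2, y2⟩, rb⟩ := b
  simp only [closedDisc, Δ, Set.subset_def, Set.mem_setOf_eq, Prod.forall] at *
  constructor
  · intro h
    set D : ℝ := (x1 - x2)^2 + (y1 - y2)^2 with hDdef
    have hD0 : 0 ≤ D := by positivity
    rcases eq_or_lt_of_le hD0 with hD | hD
    · -- centers coincide
      have hx : x1 = x2 := by nlinarith [sq_nonneg (x1 - x2), sq_nonneg (y1 - y2)]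
      have hy : y1 = y2 := by nlinarith [sq_nonneg (x1 - x2), sq_nonneg (y1 - y2)]
      have hmem := h (x1 + ra) y1 (by nlinarith)
      subst hx hy
      constructor
      · nlinarith
      · nlinarith
    · set d : ℝ := Real.sqrt D with hddef
      have hd2 : d^2 = D := Real.sq_sqrt hD0
      have hdpos : 0 < d := Real.sqrt_pos.mpr (by linarith)
      have hdne : d ≠ 0 := ne_of_gt hdpos
      -- witness point on boundary of a, farthest from b's center
      have hmem : ((x1 + (ra/d)*(x1-x2)) - x1)^2 + ((y1 + (ra/d)*(y1-y2)) - y1)^2 ≤ ra^2 := by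
        have : ((x1 + (ra/d)*(x1-x2)) - x1)^2 + ((y1 + (ra/d)*(y1-y2)) - y1)^2
            = (ra/d)^2 * D := by ring
        rw [this, div_pow, hd2]
        field_simp
        exact le_rfl
      have hb2 := h _ _ hmem
      have key : (d + ra)^2 ≤ rb^2 := by
        have : ((x1 + (ra/d)*(x1-x2)) - x2)^2 + ((y1 + (ra/d)*(y1-y2)) - y2)^2
            = ((d + ra)/d)^2 * D := by
          field_simp
          ring
        rw [this, div_pow, hd2] at hb2
        calc (d + ra)^2 = (d+ra)^2 / D * D := by field_simp
        _ ≤ rb^2 := hb2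
      have hle : d + ra ≤ rb := by nlinarith
      constructor
      · nlinarith
      · nlinarith
  · rintro ⟨h1, h2⟩ p1 p2 hp
    set D : ℝ := (x1 - x2)^2 + (y1 - y2)^2 with hDdef
    have hD0 : 0 ≤ D := by positivity
    set s : ℝ := (p1 - x1)^2 + (p2 - y1)^2 with hsdef
    have hs0 : 0 ≤ s := by positivity
    -- inner product bound (Cauchy–Schwarz)
    have hcs : ((p1 - x1)*(x1 - x2) + (p2 - y1)*(y1 - y2))^2 ≤ s * D := by
      nlinarith [sq_nonneg ((p1 - x1)*(y1 - y2) - (p2 - y1)*(x1 - x2))]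
    have h1' : D ≤ (ra - rb)^2 := h1
    set ip : ℝ := (p1 - x1)*(x1 - x2) + (p2 - y1)*(y1 - y2) with hipdef
    have hexp : (p1 - x2)^2 + (p2 - y2)^2 = s + D + 2*ip := by
      rw [hipdef, hsdef, hDdef]; ring
    clear_value D s ip
    have hsd : s * D ≤ (ra * (rb - ra))^2 := by
      have h := mul_le_mul hp h1' hD0 (sq_nonneg ra)
      have he : (ra * (rb - ra))^2 = ra^2 * (ra - rb)^2 := by ring
      linarith [he ▸ h]
    have hip : ip ≤ ra * (rb - ra) := by
      nlinarith [hcs, hsd, mul_nonneg ha.le (sub_nonneg.mpr h2)]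
    rw [hexp]
    nlinarith [hp, h1', hip]
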